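/- Let λ_1,…,λ_n denote the eigenvalues of C. Then for every A ∈ 𝒜, (1/n)·tr(Aᵀ Λ_σ C) ≤ (1/n)·Σ_{i=1}^n λ_i^{1/2}, the matrix A_* = Λ_σ^{-1} C^{-1/2} belongs to 𝒜 and attains this bound with equality, and A_* is the unique element of 𝒜 attaining it. -/

import Mathlib

open Matrix BigOperators

/-- The positive semidefinite square root of a positive semidefinite matrix
(the definition of `Matrix.PosSemidef.sqrt` in the older Mathlib, since removed). -/
noncomputable def Matrix.PosSemidef.sqrt {n : Type*} [Fintype n] [DecidableEq n]
    {A : Matrix n n ℝ} (hA : A.PosSemidef) : Matrix n n ℝ :=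
  hA.1.eigenvectorUnitary.1 * diagonal ((↑) ∘ (√·) ∘ hA.1.eigenvalues) *
  (star hA.1.eigenvectorUnitary : Matrix n n ℝ)

private lemma oasis_trace_diag {n : ℕ} (R : Matrix (Fin n) (Fin n) ℝ) (d : Fin n → ℝ) :
    (R * Matrix.diagonal d).trace = ∑ i, R i i * d i := by
  simp [Matrix.trace, Matrix.mul_apply, Matrix.diagonal]

private lemma oasis_trace_conj {n : ℕ} (X U D : Matrix (Fin n) (Fin n) ℝ) :
    (X * (U * D * Uᵀ)).trace = ((Uᵀ * X * U) * D).trace := by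
  have h1 : X * (U * D * Uᵀ) = (X * U * D) * Uᵀ := by simp only [Matrix.mul_assoc]
  have h2 : Uᵀ * (X * U * D) = (Uᵀ * X * U) * D := by simp only [Matrix.mul_assoc]
  rw [h1, Matrix.trace_mul_comm, h2]

private lemma oasis_rows {n : ℕ} (R : Matrix (Fin n) (Fin n) ℝ) (h : R * Rᵀ = 1) (i : Fin n) :
    ∑ j, (R i j)^2 = 1 := by
  have h2 := congrArg (fun X : Matrix (Fin n) (Fin n) ℝ => X i i) h
  simp only [Matrix.mul_apply, Matrix.transpose_apply, Matrix.one_apply_eq] at h2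
  calc ∑ j, (R i j)^2 = ∑ j, R i j * R i j := by
        apply Finset.sum_congr rfl; intros; ring
    _ = 1 := h2

private lemma oasis_RRt {n : ℕ} (U Q : Matrix (Fin n) (Fin n) ℝ)
    (hUU' : U * Uᵀ = 1) (hQ : Qᵀ * Q = 1) :
    (Uᵀ * Qᵀ * U) * (Uᵀ * Qᵀ * U)ᵀ = 1 := by
  have hT : (Uᵀ * Qᵀ * U)ᵀ = Uᵀ * Q * U := by
    rw [Matrix.transpose_mul, Matrix.transpose_mul, Matrix.transpose_transpose,
      Matrix.transpose_transpose, Matrix.mul_assoc]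
  rw [hT]
  have hUtU : Uᵀ * U = 1 := mul_eq_one_comm.mp hUU'
  calc (Uᵀ * Qᵀ * U) * (Uᵀ * Q * U)
      = Uᵀ * (Qᵀ * ((U * Uᵀ) * Q)) * U := by simp only [Matrix.mul_assoc]
    _ = Uᵀ * (Qᵀ * Q) * U := by rw [hUU', one_mul]
    _ = 1 := by rw [hQ, mul_one, hUtU]

private lemma oasis_eq_one {n : ℕ} (R : Matrix (Fin n) (Fin n) ℝ)
    (hrows : ∀ i, ∑ j, (R i j)^2 = 1) (hdiag : ∀ i, R i i = 1) : R = 1 := by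
  ext i j
  by_cases hij : i = j
  · subst hij
    rw [hdiag i, Matrix.one_apply_eq]
  · have h2 : (R i i)^2 + ∑ k ∈ Finset.univ.erase i, (R i k)^2 = ∑ k, (R i k)^2 :=
      Finset.add_sum_erase _ (fun k => (R i k)^2) (Finset.mem_univ i)
    rw [hrows i, hdiag i, one_pow] at h2
    have hzero : ∑ k ∈ Finset.univ.erase i, (R i k)^2 = 0 := by linarith
    have hall : ∀ k ∈ Finset.univ.erase i, (R i k)^2 = 0 :=
      (Finset.sum_eq_zero_iff_of_nonneg (fun k _ => sq_nonneg _)).mp hzero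
    have h3 : (R i j)^2 = 0 :=
      hall j (Finset.mem_erase.mpr ⟨fun h => hij h.symm, Finset.mem_univ j⟩)
    rw [Matrix.one_apply_ne hij]
    exact pow_eq_zero_iff (by norm_num) |>.mp h3

/-- **OASIS (equal weights).** For every `A ∈ 𝒜`, the average correlation
`(1/n)·tr(Aᵀ Λ_σ C)` is bounded by `(1/n)·Σ_i λ_i^{1/2}` where `λ_i` are the
eigenvalues of the correlation matrix `C`; the matrix `A_* = Λ_σ⁻¹ C^{-1/2}`
belongs to `𝒜`, attains the bound, and is the unique element of `𝒜` doing so. -/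
theorem stmt_3 {n : ℕ} (hn : 1 ≤ n)
    (S : Matrix (Fin n) (Fin n) ℝ) (hS : S.PosDef)
    (Ls : Matrix (Fin n) (Fin n) ℝ)
    (hLs : Ls = Matrix.diagonal (fun i => Real.sqrt (S i i)))
    (C : Matrix (Fin n) (Fin n) ℝ) (hC : C = Ls⁻¹ * S * Ls⁻¹)
    (hCpd : C.PosDef)
    (Astar : Matrix (Fin n) (Fin n) ℝ)
    (hAstar : Astar = Ls⁻¹ * (hCpd.posSemidef.sqrt)⁻¹) :
    (∀ A : Matrix (Fin n) (Fin n) ℝ, Aᵀ * S * A = 1 →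
        (1 / (n : ℝ)) * (Aᵀ * Ls * C).trace
          ≤ (1 / (n : ℝ)) * ∑ i, Real.sqrt (hCpd.1.eigenvalues i)) ∧
    Astarᵀ * S * Astar = 1 ∧
    (1 / (n : ℝ)) * (Astarᵀ * Ls * C).trace
      = (1 / (n : ℝ)) * ∑ i, Real.sqrt (hCpd.1.eigenvalues i) ∧
    (∀ A : Matrix (Fin n) (Fin n) ℝ, Aᵀ * S * A = 1 →
        (1 / (n : ℝ)) * (Aᵀ * Ls * C).trace
          = (1 / (n : ℝ)) * ∑ i, Real.sqrt (hCpd.1.eigenvalues i) →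
        A = Astar) := by
  classical
  set M := hCpd.posSemidef.sqrt with hMdefn
  set U : Matrix (Fin n) (Fin n) ℝ := (hCpd.1.eigenvectorUnitary : Matrix (Fin n) (Fin n) ℝ)
    with hUdef
  set lam : Fin n → ℝ := hCpd.1.eigenvalues with hlamdef
  set D : Matrix (Fin n) (Fin n) ℝ := Matrix.diagonal (fun i => Real.sqrt (lam i)) with hDdef
  -- basic facts
  have hstarU : star U = Uᵀ := by
    rw [Matrix.star_eq_conjTranspose, Matrix.conjTranspose_eq_transpose_of_trivial]
  have hUUstar : U * Uᵀ = 1 := by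
    rw [← hstarU]
    exact Matrix.mem_unitaryGroup_iff.mp hCpd.1.eigenvectorUnitary.2
  have hUstarU : Uᵀ * U = 1 := mul_eq_one_comm.mp hUUstar
  have hMspec : M = U * D * Uᵀ := by
    have h0 : M = U * D * star U := rfl
    rwa [hstarU] at h0
  have hMherm : M.IsHermitian := by
    rw [Matrix.IsHermitian, Matrix.conjTranspose_eq_transpose_of_trivial, hMspec,
      Matrix.transpose_mul, Matrix.transpose_mul, Matrix.transpose_transpose, hDdef,
      Matrix.diagonal_transpose, Matrix.mul_assoc]
  have hMsym : Mᵀ = M := by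
    rw [← Matrix.conjTranspose_eq_transpose_of_trivial]
    exact hMherm
  have hMM : M * M = C := by
    have hCspec : C = U * diagonal lam * Uᵀ := by
      have h := hCpd.1.spectral_theorem
      rw [Unitary.conjStarAlgAut_apply] at h
      rw [← hstarU]
      simpa using h
    rw [hMspec, hCspec]
    calc U * D * Uᵀ * (U * D * Uᵀ) = U * D * (Uᵀ * U) * D * Uᵀ := by simp only [Matrix.mul_assoc]
      _ = U * (D * D) * Uᵀ := by rw [hUstarU, mul_one, Matrix.mul_assoc U D D]
      _ = U * diagonal lam * Uᵀ := by
        rw [hDdef, Matrix.diagonal_mul_diagonal]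
        have hfun : (fun i => Real.sqrt (lam i) * Real.sqrt (lam i)) = lam :=
          funext fun i => Real.mul_self_sqrt (hCpd.eigenvalues_pos i).le
        rw [hfun]
  have hlampos : ∀ i, 0 < lam i := fun i => hCpd.eigenvalues_pos i
  have hsqrtpos : ∀ i, 0 < Real.sqrt (lam i) := fun i => Real.sqrt_pos.mpr (hlampos i)
  -- Ls facts
  have hSdiag : ∀ i, 0 < S i i := by
    intro i
    have h : (Pi.single i 1 : Fin n → ℝ) ≠ 0 := by
      intro h
      have := congrFun h i
      simp at this
    exact hS.diag_pos
  have hLsT : Lsᵀ = Ls := by rw [hLs, Matrix.diagonal_transpose]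
  have hLsdet : IsUnit Ls.det := by
    rw [hLs, Matrix.det_diagonal]
    exact (Finset.prod_pos (fun i _ => Real.sqrt_pos.mpr (hSdiag i))).ne'.isUnit
  have hLsLsinv : Ls * Ls⁻¹ = 1 := Matrix.mul_nonsing_inv Ls hLsdet
  have hLsinvLs : Ls⁻¹ * Ls = 1 := Matrix.nonsing_inv_mul Ls hLsdet
  have hLsinvT : (Ls⁻¹)ᵀ = Ls⁻¹ := by rw [Matrix.transpose_nonsing_inv, hLsT]
  -- S = Ls * C * Ls
  have hSLCL : S = Ls * C * Ls := by
    have h1 : Ls * (Ls⁻¹ * S * Ls⁻¹) * Ls = S := by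
      calc Ls * (Ls⁻¹ * S * Ls⁻¹) * Ls = (Ls * Ls⁻¹) * S * (Ls⁻¹ * Ls) := by
            simp only [Matrix.mul_assoc]
        _ = S := by rw [hLsLsinv, hLsinvLs, one_mul, mul_one]
    rw [hC, h1]
  -- M invertible
  have hMdet : IsUnit M.det := by
    have h : M.det * M.det = C.det := by rw [← Matrix.det_mul, hMM]
    have hCdet : C.det ≠ 0 := hCpd.det_pos.ne'
    have hne : M.det ≠ 0 := by
      intro hz
      rw [hz, zero_mul] at h
      exact hCdet h.symm
    exact hne.isUnit
  have hMMinv : M * M⁻¹ = 1 := Matrix.mul_nonsing_inv M hMdet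
  -- general identities for arbitrary A
  have hQtr : ∀ A : Matrix (Fin n) (Fin n) ℝ, (M * (Ls * A))ᵀ * M = Aᵀ * Ls * C := by
    intro A
    rw [Matrix.transpose_mul, Matrix.transpose_mul, hMsym, hLsT]
    calc Aᵀ * Ls * M * M = Aᵀ * Ls * (M * M) := by rw [Matrix.mul_assoc]
      _ = Aᵀ * Ls * C := by rw [hMM]
  have hQQ : ∀ A : Matrix (Fin n) (Fin n) ℝ, (M * (Ls * A))ᵀ * (M * (Ls * A)) = Aᵀ * S * A := by
    intro A
    rw [Matrix.transpose_mul, Matrix.transpose_mul, hMsym, hLsT, hSLCL, ← hMM]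
    simp only [Matrix.mul_assoc]
  -- the R matrix and trace formula
  have key : ∀ A : Matrix (Fin n) (Fin n) ℝ, Aᵀ * S * A = 1 →
      ∃ R : Matrix (Fin n) (Fin n) ℝ,
        (∀ i, ∑ j, (R i j)^2 = 1) ∧
        (Aᵀ * Ls * C).trace = ∑ i, R i i * Real.sqrt (lam i) ∧
        (R = 1 → A = Astar) := by
    intro A hA
    have hQ : (M * (Ls * A))ᵀ * (M * (Ls * A)) = 1 := by rw [hQQ A, hA]
    refine ⟨Uᵀ * (M * (Ls * A))ᵀ * U, ?_, ?_, ?_⟩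
    · exact oasis_rows _ (oasis_RRt U (M * (Ls * A)) hUUstar hQ)
    · have h1 : Aᵀ * Ls * C = (M * (Ls * A))ᵀ * M := (hQtr A).symm
      rw [h1, hMspec, oasis_trace_conj, hDdef, oasis_trace_diag]
    · intro hR1
      have hQT : (M * (Ls * A))ᵀ = 1 := by
        have h2 : U * (Uᵀ * (M * (Ls * A))ᵀ * U) * Uᵀ = (M * (Ls * A))ᵀ := by
          calc U * (Uᵀ * (M * (Ls * A))ᵀ * U) * Uᵀ
              = (U * Uᵀ) * (M * (Ls * A))ᵀ * (U * Uᵀ) := by simp only [Matrix.mul_assoc]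
            _ = (M * (Ls * A))ᵀ := by rw [hUUstar, one_mul, mul_one]
        rw [hR1] at h2
        rw [← h2, mul_one, hUUstar]
      have hQ1 : M * (Ls * A) = 1 := by
        have h3 := congrArg Matrix.transpose hQT
        rwa [Matrix.transpose_transpose, Matrix.transpose_one] at h3
      have hMinv : M⁻¹ = Ls * A := Matrix.inv_eq_right_inv hQ1
      rw [hAstar, hMinv, ← Matrix.mul_assoc, hLsinvLs, one_mul]
  -- positivity of 1/n
  have hninv : (0 : ℝ) < 1 / (n : ℝ) := by
    have h : (0 : ℝ) < n := by exact_mod_cast hn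
    positivity
  have hdiag_le : ∀ (R : Matrix (Fin n) (Fin n) ℝ), (∀ i, ∑ j, (R i j)^2 = 1) →
      ∀ i, R i i ≤ 1 := by
    intro R hR i
    have h1 : (R i i)^2 ≤ 1 := by
      rw [← hR i]
      exact Finset.single_le_sum (fun j _ => sq_nonneg (R i j)) (Finset.mem_univ i)
    nlinarith [h1]
  have hterm_le : ∀ (R : Matrix (Fin n) (Fin n) ℝ), (∀ i, ∑ j, (R i j)^2 = 1) →
      ∀ i ∈ Finset.univ, R i i * Real.sqrt (lam i) ≤ Real.sqrt (lam i) := by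
    intro R hR i _
    have := hdiag_le R hR i
    nlinarith [hsqrtpos i]
  -- part 1: inequality
  have part1 : ∀ A : Matrix (Fin n) (Fin n) ℝ, Aᵀ * S * A = 1 →
      (1 / (n : ℝ)) * (Aᵀ * Ls * C).trace
        ≤ (1 / (n : ℝ)) * ∑ i, Real.sqrt (hCpd.1.eigenvalues i) := by
    intro A hA
    obtain ⟨R, hR, htr, -⟩ := key A hA
    rw [htr]
    exact mul_le_mul_of_nonneg_left (Finset.sum_le_sum (hterm_le R hR)) hninv.le
  -- part 2: Astar is in the constraint set
  have hQAstar : M * (Ls * Astar) = 1 := by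
    rw [hAstar]
    calc M * (Ls * (Ls⁻¹ * M⁻¹)) = M * ((Ls * Ls⁻¹) * M⁻¹) := by simp only [Matrix.mul_assoc]
      _ = M * M⁻¹ := by rw [hLsLsinv, one_mul]
      _ = 1 := hMMinv
  have part2 : Astarᵀ * S * Astar = 1 := by
    rw [← hQQ Astar, hQAstar]
    simp
  -- part 3: equality at Astar
  have htrM : M.trace = ∑ i, Real.sqrt (lam i) := by
    rw [hMspec]
    calc (U * D * Uᵀ).trace = (Uᵀ * (U * D)).trace := Matrix.trace_mul_comm _ _
      _ = ((Uᵀ * U) * D).trace := by rw [Matrix.mul_assoc]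
      _ = D.trace := by rw [hUstarU, one_mul]
      _ = ∑ i, Real.sqrt (lam i) := by rw [hDdef, Matrix.trace_diagonal]
  have part3 : (1 / (n : ℝ)) * (Astarᵀ * Ls * C).trace
      = (1 / (n : ℝ)) * ∑ i, Real.sqrt (hCpd.1.eigenvalues i) := by
    have h1 : Astarᵀ * Ls * C = M := by
      rw [← hQtr Astar, hQAstar, Matrix.transpose_one, one_mul]
    rw [h1, htrM]
  -- part 4: uniqueness
  refine ⟨part1, part2, part3, ?_⟩
  intro A hA heq
  obtain ⟨R, hR, htr, himp⟩ := key A hA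
  apply himp
  have hsum : ∑ i, R i i * Real.sqrt (lam i) = ∑ i, Real.sqrt (lam i) := by
    rw [htr] at heq
    exact mul_left_cancel₀ hninv.ne' heq
  have hterm := (Finset.sum_eq_sum_iff_of_le (hterm_le R hR)).mp hsum
  have hRii : ∀ i, R i i = 1 := by
    intro i
    have h := hterm i (Finset.mem_univ i)
    have h2 : R i i * Real.sqrt (lam i) = 1 * Real.sqrt (lam i) := by rw [one_mul]; exact h
    exact mul_right_cancel₀ (hsqrtpos i).ne' h2
  exact oasis_eq_one R hR hRii
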